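/- Let x ∈ H^n (hyperboloid model) with |x₁| ≤ ⋯ ≤ |x_n|, and for t in the interval I_k = (|x_{k−1}|, |x_k|) define φ_k(t) = (x_{n+1}(x_{n+1}+t) − Σ_{i=k}^{n}(x_i² − t|x_i|)) / √((x_{n+1}+t)² − Σ_{i=k}^{n}(|x_i| − t)²). Then φ_k is differentiable with φ_k'(t) > 0 on I_k, i.e., φ_k is strictly increasing on each interval I_k. -/

import Mathlib

open Set

/-- Strict monotonicity of `φ_k(t) = −⟨p_x(t), x⟩_M` on the interval
`I_k = (|x_{k−1}|, |x_k|)` (core computation in the proof of Theorem 6.1).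
Indices run from `1` to `n+1`, with `x 0 = 0`. -/
theorem stmt13 (n : ℕ) (x : ℕ → ℝ) (k : ℕ)
    (hx0 : x 0 = 0)
    (hhyp : (∑ i ∈ Finset.Icc 1 n, (x i) ^ 2) - (x (n + 1)) ^ 2 = -1)
    (hxpos : 0 < x (n + 1))
    (hsorted : ∀ i j, 1 ≤ i → i ≤ j → j ≤ n → |x i| ≤ |x j|)
    (hk1 : 1 ≤ k) (hkn : k ≤ n) :
    let φ : ℝ → ℝ := fun t =>
      (x (n + 1) * (x (n + 1) + t)
          - ∑ i ∈ Finset.Icc k n, ((x i) ^ 2 - t * |x i|)) /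
        Real.sqrt ((x (n + 1) + t) ^ 2 - ∑ i ∈ Finset.Icc k n, (|x i| - t) ^ 2)
    let I : Set ℝ := Ioo (|x (k - 1)|) (|x k|)
    (∀ t ∈ I,
        0 < (x (n + 1) + t) ^ 2 - ∑ i ∈ Finset.Icc k n, (|x i| - t) ^ 2) →
    (∀ t ∈ I, DifferentiableAt ℝ φ t ∧ 0 < deriv φ t) ∧ StrictMonoOn φ I := by
  intro φ I hpos
  have hφdef : φ = fun t =>
      (x (n + 1) * (x (n + 1) + t)
          - ∑ i ∈ Finset.Icc k n, ((x i) ^ 2 - t * |x i|)) /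
        Real.sqrt ((x (n + 1) + t) ^ 2 - ∑ i ∈ Finset.Icc k n, (|x i| - t) ^ 2) := rfl
  have hIdef : I = Ioo (|x (k - 1)|) (|x k|) := rfl
  set A := x (n + 1) with hA
  set S1 := ∑ i ∈ Finset.Icc k n, |x i| with hS1
  set S2 := ∑ i ∈ Finset.Icc k n, (x i) ^ 2 with hS2
  set m : ℝ := ((Finset.Icc k n).card : ℝ) with hm
  -- rewrite numerator and radicand as polynomials in t
  have hnum : ∀ t : ℝ, A * (A + t) - ∑ i ∈ Finset.Icc k n, ((x i) ^ 2 - t * |x i|)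
      = A ^ 2 - S2 + (A + S1) * t := by
    intro t
    rw [Finset.sum_sub_distrib, ← Finset.mul_sum, ← hS1, ← hS2]
    ring
  have hden : ∀ t : ℝ, (A + t) ^ 2 - ∑ i ∈ Finset.Icc k n, (|x i| - t) ^ 2
      = (1 - m) * t ^ 2 + 2 * (A + S1) * t + (A ^ 2 - S2) := by
    intro t
    have h : ∀ i ∈ Finset.Icc k n, (|x i| - t) ^ 2 = (x i) ^ 2 - 2 * t * |x i| + t ^ 2 := by
      intro i _
      rw [sub_sq, sq_abs]
      ring
    rw [Finset.sum_congr rfl h, Finset.sum_add_distrib, Finset.sum_sub_distrib,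
      ← Finset.mul_sum, ← hS1, ← hS2, Finset.sum_const, nsmul_eq_mul, ← hm]
    ring
  set D : ℝ → ℝ := fun t => (1 - m) * t ^ 2 + 2 * (A + S1) * t + (A ^ 2 - S2) with hD
  have hφ : φ = fun t => (A ^ 2 - S2 + (A + S1) * t) / Real.sqrt (D t) := by
    funext t
    rw [hφdef]
    simp only
    rw [hnum t, hden t]
  have hDpos : ∀ t ∈ I, 0 < D t := by
    intro t ht
    have := hpos t ht
    rw [hden t] at this
    exact this
  -- basic positivity facts
  have hApos : 0 < A := hxpos
  have hS1nn : 0 ≤ S1 := Finset.sum_nonneg fun i _ => abs_nonneg _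
  have hS2A : S2 < A ^ 2 := by
    have hsub : Finset.Icc k n ⊆ Finset.Icc 1 n := Finset.Icc_subset_Icc hk1 le_rfl
    have hle : S2 ≤ ∑ i ∈ Finset.Icc 1 n, (x i) ^ 2 :=
      Finset.sum_le_sum_of_subset_of_nonneg hsub fun i _ _ => sq_nonneg _
    linarith
  have hm1 : 1 ≤ m := by
    rw [hm]
    have : 1 ≤ (Finset.Icc k n).card := by
      rw [Nat.card_Icc]
      omega
    exact_mod_cast this
  have ht0 : ∀ t ∈ I, 0 < t := by
    intro t ht
    rw [hIdef] at ht
    exact lt_of_le_of_lt (abs_nonneg _) ht.1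
  -- the derivative
  have key : ∀ t ∈ I, HasDerivAt φ
      (((A + S1) * Real.sqrt (D t)
        - (A ^ 2 - S2 + (A + S1) * t) * (1 / (2 * Real.sqrt (D t)) * ((1 - m) * (2 * t) + 2 * (A + S1))))
        / Real.sqrt (D t) ^ 2) t := by
    intro t ht
    have hDt : 0 < D t := hDpos t ht
    have hsqrt : 0 < Real.sqrt (D t) := Real.sqrt_pos.mpr hDt
    have hDderiv : HasDerivAt D ((1 - m) * (2 * t) + 2 * (A + S1)) t := by
      have h1 : HasDerivAt (fun t : ℝ => (1 - m) * t ^ 2) ((1 - m) * (2 * t)) t := by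
        simpa using (hasDerivAt_pow 2 t).const_mul (1 - m)
      have h2 : HasDerivAt (fun t : ℝ => 2 * (A + S1) * t) (2 * (A + S1)) t := by
        simpa using (hasDerivAt_id t).const_mul (2 * (A + S1))
      exact (h1.add h2).add_const (A ^ 2 - S2)
    have hsq : HasDerivAt (fun t => Real.sqrt (D t))
        (1 / (2 * Real.sqrt (D t)) * ((1 - m) * (2 * t) + 2 * (A + S1))) t :=
      (Real.hasDerivAt_sqrt hDt.ne').comp t hDderiv
    have hN : HasDerivAt (fun t : ℝ => A ^ 2 - S2 + (A + S1) * t) (A + S1) t := by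
      simpa using ((hasDerivAt_id t).const_mul (A + S1)).const_add (A ^ 2 - S2)
    rw [hφ]
    exact hN.div hsq hsqrt.ne'
  have hderivpos : ∀ t ∈ I, DifferentiableAt ℝ φ t ∧ 0 < deriv φ t := by
    intro t ht
    have hDt : 0 < D t := hDpos t ht
    have hk := key t ht
    set s := Real.sqrt (D t) with hsdef
    have hsqrt : 0 < s := Real.sqrt_pos.mpr hDt
    have hs2 : s ^ 2 = D t := Real.sq_sqrt hDt.le
    refine ⟨hk.differentiableAt, ?_⟩
    rw [hk.deriv]
    have hX : (A + S1) * s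
        - (A ^ 2 - S2 + (A + S1) * t) * (1 / (2 * s) * ((1 - m) * (2 * t) + 2 * (A + S1)))
        = (2 * (A + S1) * s ^ 2
            - (A ^ 2 - S2 + (A + S1) * t) * ((1 - m) * (2 * t) + 2 * (A + S1)))
          / (2 * s) := by
      field_simp
    rw [hs2] at hX
    have hC : 2 * (A + S1) * D t
        - (A ^ 2 - S2 + (A + S1) * t) * ((1 - m) * (2 * t) + 2 * (A + S1))
        = 2 * t * ((A + S1) ^ 2 + (m - 1) * (A ^ 2 - S2)) := by
      simp only [hD]
      ring
    have hCpos : 0 < (A + S1) ^ 2 + (m - 1) * (A ^ 2 - S2) := by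
      have h1 : 0 < (A + S1) ^ 2 := by positivity
      have h2 : 0 ≤ (m - 1) * (A ^ 2 - S2) := mul_nonneg (by linarith) (by linarith)
      linarith
    have htpos := ht0 t ht
    rw [hX, hC, hs2]
    apply div_pos (div_pos _ (by linarith)) hDt
    exact mul_pos (by linarith) hCpos
  refine ⟨hderivpos, ?_⟩
  have hmono : StrictMonoOn φ I := by
    rw [hIdef]
    apply strictMonoOn_of_deriv_pos (convex_Ioo _ _)
    · intro t ht
      exact ((hderivpos t ht).1).continuousAt.continuousWithinAt
    · intro t ht
      rw [interior_Ioo] at ht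
      exact (hderivpos t ht).2
  exact hmono
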